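/- Let L be a flag simplicial complex with at least two vertices that is not a single simplex. Then there exist two distinct vertices v₁, v₂ of L not joined by an edge, and the graph product G over L decomposes as the amalgamated free product G = G₁ ∗_{G₀} G₂, where G₁, G₂, G₀ are the graph products over the full subcomplexes spanned by V − {v₁}, V − {v₂}, and V − {v₁, v₂} respectively. -/

import Mathlib

/-- An abstract simplicial complex on a vertex type `V`. -/
structure AbstractComplex (V : Type*) where
  faces : Set (Finset V)
  nonempty_of_mem : ∀ {s : Finset V}, s ∈ faces → s.Nonempty
  down_closed : ∀ {s t : Finset V}, s ∈ faces → t ⊆ s → t.Nonempty → t ∈ faces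

/-- The edge (adjacency) relation of the 1-skeleton of `L`. -/
def adjOf {V : Type*} [DecidableEq V] (L : AbstractComplex V) (v w : V) : Prop :=
  v ≠ w ∧ ({v, w} : Finset V) ∈ L.faces

open scoped commutatorElement in
/-- The normal subgroup of commutator relations defining the graph product. -/
def graphProductRel {V : Type*} (adj : V → V → Prop) (G : V → Type*)
    [∀ v, Group (G v)] : Subgroup (Monoid.CoprodI G) :=
  Subgroup.normalClosure
    {x | ∃ (v w : V) (_ : adj v w) (a : G v) (b : G w),
      x = ⁅Monoid.CoprodI.of a, Monoid.CoprodI.of b⁆}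

instance graphProductRelNormal {V : Type*} (adj : V → V → Prop) (G : V → Type*)
    [∀ v, Group (G v)] : (graphProductRel adj G).Normal :=
  Subgroup.normalClosure_normal

/-- The graph product of the groups `G v` over the simplicial graph `adj`. -/
def graphProduct {V : Type*} (adj : V → V → Prop) (G : V → Type*)
    [∀ v, Group (G v)] : Type _ :=
  Monoid.CoprodI G ⧸ graphProductRel adj G

instance graphProductGroup {V : Type*} (adj : V → V → Prop) (G : V → Type*)
    [∀ v, Group (G v)] : Group (graphProduct adj G) :=
  inferInstanceAs (Group (Monoid.CoprodI G ⧸ graphProductRel adj G))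

/-- The canonical map from a vertex group to the graph product. -/
def graphProductOf {V : Type*} (adj : V → V → Prop) (G : V → Type*)
    [∀ v, Group (G v)] (v : V) : G v →* graphProduct adj G :=
  (QuotientGroup.mk' (graphProductRel adj G)).comp Monoid.CoprodI.of

/-- The graph product over the full subcomplex of `L` spanned by `{v | P v}`. -/
abbrev restGraphProduct {V : Type} [DecidableEq V] (L : AbstractComplex V)
    (G : V → Type) [∀ v, Group (G v)] (P : V → Prop) : Type :=
  graphProduct (fun a b : {v : V // P v} => adjOf L a.1 b.1) (fun a : {v : V // P v} => G a.1)

instance instBoolRecGroup {X Y : Type} [gx : Group X] [gy : Group Y] (b : Bool) :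
    Group (Bool.rec (motive := fun _ => Type) Y X b) :=
  Bool.rec (motive := fun b => Group (Bool.rec (motive := fun _ => Type) Y X b)) gy gx b

/-- The family of two homomorphisms `ι₁ : G₀ →* G₁`, `ι₂ : G₀ →* G₂`, indexed by `Bool`,
whose pushout `Monoid.PushoutI` is the amalgamated free product `G₁ ∗_{G₀} G₂`. -/
def amalgFam {G₀ G₁ G₂ : Type} [Group G₀] [Group G₁] [Group G₂]
    (ι₁ : G₀ →* G₁) (ι₂ : G₀ →* G₂) :
    ∀ b : Bool, G₀ →* (Bool.rec (motive := fun _ => Type) G₂ G₁ b) :=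
  fun b => Bool.rec (motive := fun b => G₀ →* Bool.rec (motive := fun _ => Type) G₂ G₁ b)
    ι₂ ι₁ b

section GPAux

variable {V : Type*} {adj : V → V → Prop} {G : V → Type*} [∀ v, Group (G v)]
  {M : Type*} [Group M]

theorem gp_commute {v w : V} (h : adj v w) (a : G v) (b : G w) :
    Commute (graphProductOf adj G v a) (graphProductOf adj G w b) := by
  rw [← commutatorElement_eq_one_iff_commute]
  have h1 : graphProductOf adj G v a =
      QuotientGroup.mk' (graphProductRel adj G) (Monoid.CoprodI.of a) := rfl
  have h2 : graphProductOf adj G w b =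
      QuotientGroup.mk' (graphProductRel adj G) (Monoid.CoprodI.of b) := rfl
  rw [h1, h2]
  refine (map_commutatorElement (QuotientGroup.mk' (graphProductRel adj G)) _ _).symm.trans ?_
  rw [QuotientGroup.mk'_apply]
  exact (QuotientGroup.eq_one_iff _).mpr (Subgroup.subset_normalClosure ⟨v, w, h, a, b, rfl⟩)

theorem gp_rel_le_ker (f : ∀ v, G v →* M)
    (hf : ∀ v w, adj v w → ∀ (a : G v) (b : G w), Commute (f v a) (f w b)) :
    ∀ x ∈ graphProductRel adj G, (Monoid.CoprodI.lift f) x = 1 := by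
  intro x hx
  refine MonoidHom.mem_ker.mp (Subgroup.normalClosure_le_normal ?_ hx)
  rintro y ⟨v, w, hvw, a, b, rfl⟩
  refine SetLike.mem_coe.mpr (MonoidHom.mem_ker.mpr ?_)
  rw [map_commutatorElement, Monoid.CoprodI.lift_of, Monoid.CoprodI.lift_of]
  exact commutatorElement_eq_one_iff_commute.mpr (hf v w hvw a b)

/-- Lift a family of homomorphisms with commuting images to the graph product. -/
def gpLift (f : ∀ v, G v →* M)
    (hf : ∀ v w, adj v w → ∀ (a : G v) (b : G w), Commute (f v a) (f w b)) :
    graphProduct adj G →* M :=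
  QuotientGroup.lift (graphProductRel adj G) (Monoid.CoprodI.lift f)
    (fun x hx => MonoidHom.mem_ker.mpr (gp_rel_le_ker f hf x hx))

@[simp]
theorem gpLift_of (f : ∀ v, G v →* M)
    (hf : ∀ v w, adj v w → ∀ (a : G v) (b : G w), Commute (f v a) (f w b))
    (v : V) (a : G v) :
    gpLift f hf (graphProductOf adj G v a) = f v a := by
  show QuotientGroup.lift _ _ _ (QuotientGroup.mk (Monoid.CoprodI.of a)) = f v a
  rw [QuotientGroup.lift_mk', Monoid.CoprodI.lift_of]

theorem gp_hom_ext {f g : graphProduct adj G →* M}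
    (h : ∀ (v : V) (a : G v),
      f (graphProductOf adj G v a) = g (graphProductOf adj G v a)) : f = g := by
  have key : f.comp (QuotientGroup.mk' (graphProductRel adj G)) =
      g.comp (QuotientGroup.mk' (graphProductRel adj G)) :=
    Monoid.CoprodI.ext_hom _ _ fun v => MonoidHom.ext fun a => h v a
  refine MonoidHom.ext fun x => QuotientGroup.induction_on x fun z => ?_
  exact DFunLike.congr_fun key z

end GPAux

theorem gp_sub_commute {V : Type} [DecidableEq V] (L : AbstractComplex V)
    (G : V → Type) [∀ v, Group (G v)] (P : V → Prop) :
    ∀ a b : {v : V // P v}, adjOf L a.1 b.1 →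
      ∀ (x : G a.1) (y : G b.1),
        Commute (graphProductOf (adjOf L) G a.1 x) (graphProductOf (adjOf L) G b.1 y) :=
  fun _ _ hab x y => gp_commute hab x y

/-- The natural map from a restricted graph product into the full graph product. -/
def gpToFull {V : Type} [DecidableEq V] (L : AbstractComplex V)
    (G : V → Type) [∀ v, Group (G v)] (P : V → Prop) :
    restGraphProduct L G P →* graphProduct (adjOf L) G :=
  gpLift (fun a => graphProductOf (adjOf L) G a.1) (gp_sub_commute L G P)

theorem gpToFull_of {V : Type} [DecidableEq V] (L : AbstractComplex V)
    (G : V → Type) [∀ v, Group (G v)] (P : V → Prop)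
    (a : {v : V // P v}) (g : G a.1) :
    gpToFull L G P (graphProductOf (fun a b : {v : V // P v} => adjOf L a.1 b.1)
      (fun a : {v : V // P v} => G a.1) a g) = graphProductOf (adjOf L) G a.1 g :=
  gpLift_of (adj := fun a b : {v : V // P v} => adjOf L a.1 b.1)
    (G := fun a : {v : V // P v} => G a.1)
    (M := graphProduct (adjOf L) G)
    (fun a => graphProductOf (adjOf L) G a.1) (gp_sub_commute L G P) a g

/-- Let `L` be a finite flag simplicial complex with at least two
vertices that is not a single simplex, and let `{G v}` be nontrivial groups.  Then there
exist distinct vertices `v₁, v₂` not joined by an edge such that the graph product `G`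
over `L` decomposes as the amalgamated free product `G₁ ∗_{G₀} G₂`, where `G₁`, `G₂`,
`G₀` are the graph products over the full subcomplexes spanned by `V − {v₁}`, `V − {v₂}`
and `V − {v₁, v₂}` respectively (with `ι₁, ι₂` the natural inclusions of `G₀`). -/
theorem stmt_3 {V : Type} [Fintype V] [DecidableEq V]
    (L : AbstractComplex V)
    (hvert : ∀ v : V, ({v} : Finset V) ∈ L.faces)
    (hflag : ∀ s : Finset V, s.Nonempty →
      (∀ v ∈ s, ∀ w ∈ s, v ≠ w → ({v, w} : Finset V) ∈ L.faces) → s ∈ L.faces)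
    (hcard : 2 ≤ Fintype.card V)
    (hnotsimplex : (Finset.univ : Finset V) ∉ L.faces)
    (G : V → Type) [∀ v, Group (G v)] [∀ v, Nontrivial (G v)] :
    ∃ v₁ v₂ : V, v₁ ≠ v₂ ∧ ¬ adjOf L v₁ v₂ ∧
      ∀ (ι₁ : restGraphProduct L G (fun v => v ≠ v₁ ∧ v ≠ v₂) →*
          restGraphProduct L G (fun v => v ≠ v₁))
        (ι₂ : restGraphProduct L G (fun v => v ≠ v₁ ∧ v ≠ v₂) →*
          restGraphProduct L G (fun v => v ≠ v₂)),
        -- `ι₁` is the natural inclusion `G₀ → G₁`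
        (∀ (a : {v : V // v ≠ v₁ ∧ v ≠ v₂}) (g : G a.1),
          ι₁ (graphProductOf _ _ a g) =
            graphProductOf (fun a b : {v : V // v ≠ v₁} => adjOf L a.1 b.1)
              (fun a : {v : V // v ≠ v₁} => G a.1) ⟨a.1, a.2.1⟩ g) →
        -- `ι₂` is the natural inclusion `G₀ → G₂`
        (∀ (a : {v : V // v ≠ v₁ ∧ v ≠ v₂}) (g : G a.1),
          ι₂ (graphProductOf _ _ a g) =
            graphProductOf (fun a b : {v : V // v ≠ v₂} => adjOf L a.1 b.1)
              (fun a : {v : V // v ≠ v₂} => G a.1) ⟨a.1, a.2.2⟩ g) →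
        -- the amalgamated product decomposition `G ≅ G₁ ∗_{G₀} G₂`
        ∃ ψ : graphProduct (adjOf L) G ≃* Monoid.PushoutI (amalgFam ι₁ ι₂),
          (∀ (v : V) (h : v ≠ v₁) (g : G v),
            ψ (graphProductOf (adjOf L) G v g) =
              Monoid.PushoutI.of (φ := amalgFam ι₁ ι₂) true
                (graphProductOf (fun a b : {v : V // v ≠ v₁} => adjOf L a.1 b.1)
                  (fun a : {v : V // v ≠ v₁} => G a.1) ⟨v, h⟩ g)) ∧
          (∀ (v : V) (h : v ≠ v₂) (g : G v),
            ψ (graphProductOf (adjOf L) G v g) =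
              Monoid.PushoutI.of (φ := amalgFam ι₁ ι₂) false
                (graphProductOf (fun a b : {v : V // v ≠ v₂} => adjOf L a.1 b.1)
                  (fun a : {v : V // v ≠ v₂} => G a.1) ⟨v, h⟩ g)) := by
  classical
  have hVne : Nonempty V := Fintype.card_pos_iff.mp (by omega)
  obtain ⟨v₁, v₂, hne, hface⟩ :
      ∃ v₁ v₂ : V, v₁ ≠ v₂ ∧ ({v₁, v₂} : Finset V) ∉ L.faces := by
    by_contra hcon
    push_neg at hcon
    exact hnotsimplex (hflag _ Finset.univ_nonempty
      (fun v _ w _ hvw => hcon v w hvw))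
  refine ⟨v₁, v₂, hne, fun h => hface h.2, ?_⟩
  intro ι₁ ι₂ hι₁ hι₂
  -- the two sides agree on the common part
  have key : ∀ (v : V) (h1 : v ≠ v₁) (h2 : v ≠ v₂) (g : G v),
      Monoid.PushoutI.of (φ := amalgFam ι₁ ι₂) true
        (graphProductOf (fun a b : {v : V // v ≠ v₁} => adjOf L a.1 b.1)
          (fun a : {v : V // v ≠ v₁} => G a.1) ⟨v, h1⟩ g) =
      Monoid.PushoutI.of (φ := amalgFam ι₁ ι₂) false
        (graphProductOf (fun a b : {v : V // v ≠ v₂} => adjOf L a.1 b.1)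
          (fun a : {v : V // v ≠ v₂} => G a.1) ⟨v, h2⟩ g) := by
    intro v h1 h2 g
    have e1 := hι₁ ⟨v, h1, h2⟩ g
    have e2 := hι₂ ⟨v, h1, h2⟩ g
    rw [← e1, ← e2]
    exact (Monoid.PushoutI.of_apply_eq_base (amalgFam ι₁ ι₂) true _).trans
      (Monoid.PushoutI.of_apply_eq_base (amalgFam ι₁ ι₂) false _).symm
  -- the forward family of vertex homomorphisms
  let fwdf : ∀ v : V, G v →* Monoid.PushoutI (amalgFam ι₁ ι₂) := fun v =>
    if h : v = v₁ then
      (Monoid.PushoutI.of (φ := amalgFam ι₁ ι₂) false).comp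
        (graphProductOf (fun a b : {v : V // v ≠ v₂} => adjOf L a.1 b.1)
          (fun a : {v : V // v ≠ v₂} => G a.1) ⟨v, by rw [h]; exact hne⟩)
    else
      (Monoid.PushoutI.of (φ := amalgFam ι₁ ι₂) true).comp
        (graphProductOf (fun a b : {v : V // v ≠ v₁} => adjOf L a.1 b.1)
          (fun a : {v : V // v ≠ v₁} => G a.1) ⟨v, h⟩)
  have fwdf_eq1 : ∀ (v : V) (h : v ≠ v₁) (g : G v),
      fwdf v g = Monoid.PushoutI.of (φ := amalgFam ι₁ ι₂) true
        (graphProductOf (fun a b : {v : V // v ≠ v₁} => adjOf L a.1 b.1)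
          (fun a : {v : V // v ≠ v₁} => G a.1) ⟨v, h⟩ g) := by
    intro v h g
    simp only [fwdf, dif_neg h, MonoidHom.comp_apply]
  have fwdf_eq2 : ∀ (v : V) (h : v = v₁) (g : G v),
      fwdf v g = Monoid.PushoutI.of (φ := amalgFam ι₁ ι₂) false
        (graphProductOf (fun a b : {v : V // v ≠ v₂} => adjOf L a.1 b.1)
          (fun a : {v : V // v ≠ v₂} => G a.1)
            ⟨v, fun e => hne (h.symm.trans e)⟩ g) := by
    intro v h g
    simp only [fwdf, dif_pos h, MonoidHom.comp_apply]
  have fwdf_alt : ∀ (v : V) (h2 : v ≠ v₂) (g : G v),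
      fwdf v g = Monoid.PushoutI.of (φ := amalgFam ι₁ ι₂) false
        (graphProductOf (fun a b : {v : V // v ≠ v₂} => adjOf L a.1 b.1)
          (fun a : {v : V // v ≠ v₂} => G a.1) ⟨v, h2⟩ g) := by
    intro v h2 g
    by_cases h : v = v₁
    · exact fwdf_eq2 v h g
    · exact (fwdf_eq1 v h g).trans (key v h h2 g)
  have hcomm : ∀ (v w : V), adjOf L v w → ∀ (a : G v) (b : G w),
      Commute (fwdf v a) (fwdf w b) := by
    intro v w hvw a b
    by_cases hv : v = v₁
    · have hw2 : w ≠ v₂ := fun e => hface (by rw [← hv, ← e]; exact hvw.2)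
      rw [fwdf_eq2 v hv a, fwdf_alt w hw2 b]
      exact (gp_commute (adj := fun a b : {v : V // v ≠ v₂} => adjOf L a.1 b.1)
        (G := fun a : {v : V // v ≠ v₂} => G a.1)
        (v := ⟨v, fun e => hne (hv.symm.trans e)⟩) (w := ⟨w, hw2⟩) hvw a b).map
        (Monoid.PushoutI.of (φ := amalgFam ι₁ ι₂) false)
    · by_cases hw : w = v₁
      · have hv2 : v ≠ v₂ := fun e =>
          hface (by rw [← hw, ← e, Finset.pair_comm]; exact hvw.2)
        rw [fwdf_alt v hv2 a, fwdf_eq2 w hw b]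
        exact (gp_commute (adj := fun a b : {v : V // v ≠ v₂} => adjOf L a.1 b.1)
          (G := fun a : {v : V // v ≠ v₂} => G a.1)
          (v := ⟨v, hv2⟩) (w := ⟨w, fun e => hne (hw.symm.trans e)⟩) hvw a b).map
          (Monoid.PushoutI.of (φ := amalgFam ι₁ ι₂) false)
      · rw [fwdf_eq1 v hv a, fwdf_eq1 w hw b]
        exact (gp_commute (adj := fun a b : {v : V // v ≠ v₁} => adjOf L a.1 b.1)
          (G := fun a : {v : V // v ≠ v₁} => G a.1)
          (v := ⟨v, hv⟩) (w := ⟨w, hw⟩) hvw a b).map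
          (Monoid.PushoutI.of (φ := amalgFam ι₁ ι₂) true)
  let fwd : graphProduct (adjOf L) G →* Monoid.PushoutI (amalgFam ι₁ ι₂) :=
    gpLift fwdf hcomm
  -- the backward map
  let j₁ := gpToFull L G (fun v => v ≠ v₁)
  let j₂ := gpToFull L G (fun v => v ≠ v₂)
  let j₀ := gpToFull L G (fun v => v ≠ v₁ ∧ v ≠ v₂)
  let bf : ∀ b : Bool, (Bool.rec (motive := fun _ => Type)
      (restGraphProduct L G fun v => v ≠ v₂) (restGraphProduct L G fun v => v ≠ v₁) b)
        →* graphProduct (adjOf L) G :=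
    fun b => Bool.rec (motive := fun b => (Bool.rec (motive := fun _ => Type)
      (restGraphProduct L G fun v => v ≠ v₂) (restGraphProduct L G fun v => v ≠ v₁) b)
        →* graphProduct (adjOf L) G) j₂ j₁ b
  have compat : ∀ b : Bool, (bf b).comp (amalgFam ι₁ ι₂ b) = j₀ := by
    intro b
    cases b
    · refine gp_hom_ext fun a g => ?_
      show j₂ (ι₂ (graphProductOf _ _ a g)) = j₀ (graphProductOf _ _ a g)
      rw [hι₂ a g]
      exact (gpToFull_of L G (fun v => v ≠ v₂) ⟨a.1, a.2.2⟩ g).trans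
        (gpToFull_of L G (fun v => v ≠ v₁ ∧ v ≠ v₂) a g).symm
    · refine gp_hom_ext fun a g => ?_
      show j₁ (ι₁ (graphProductOf _ _ a g)) = j₀ (graphProductOf _ _ a g)
      rw [hι₁ a g]
      exact (gpToFull_of L G (fun v => v ≠ v₁) ⟨a.1, a.2.1⟩ g).trans
        (gpToFull_of L G (fun v => v ≠ v₁ ∧ v ≠ v₂) a g).symm
  let back : Monoid.PushoutI (amalgFam ι₁ ι₂) →* graphProduct (adjOf L) G :=
    Monoid.PushoutI.lift bf j₀ compat
  have hbf : back.comp fwd = MonoidHom.id _ := by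
    refine gp_hom_ext fun v g => ?_
    simp only [MonoidHom.comp_apply, MonoidHom.id_apply]
    rw [show fwd (graphProductOf (adjOf L) G v g) = fwdf v g from
      gpLift_of (adj := adjOf L) (G := G)
        (M := Monoid.PushoutI (amalgFam ι₁ ι₂)) fwdf hcomm v g]
    by_cases h : v = v₁
    · rw [fwdf_eq2 v h g]
      show back (Monoid.PushoutI.of false _) = _
      rw [Monoid.PushoutI.lift_of]
      exact gpToFull_of L G (fun v => v ≠ v₂) ⟨v, fun e => hne (h.symm.trans e)⟩ g
    · rw [fwdf_eq1 v h g]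
      show back (Monoid.PushoutI.of true _) = _
      rw [Monoid.PushoutI.lift_of]
      exact gpToFull_of L G (fun v => v ≠ v₁) ⟨v, h⟩ g
  have hfb : fwd.comp back = MonoidHom.id _ := by
    refine Monoid.PushoutI.hom_ext_nonempty fun b => ?_
    cases b
    · refine gp_hom_ext fun a g => ?_
      show fwd (back (Monoid.PushoutI.of false (graphProductOf _ _ a g))) =
        Monoid.PushoutI.of false (graphProductOf _ _ a g)
      rw [Monoid.PushoutI.lift_of]
      have : j₂ (graphProductOf _ _ a g) = graphProductOf (adjOf L) G a.1 g :=
        gpToFull_of L G (fun v => v ≠ v₂) a g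
      rw [this]
      exact (gpLift_of (adj := adjOf L) (G := G)
        (M := Monoid.PushoutI (amalgFam ι₁ ι₂)) fwdf hcomm a.1 g).trans
        (fwdf_alt a.1 a.2 g)
    · refine gp_hom_ext fun a g => ?_
      show fwd (back (Monoid.PushoutI.of true (graphProductOf _ _ a g))) =
        Monoid.PushoutI.of true (graphProductOf _ _ a g)
      rw [Monoid.PushoutI.lift_of]
      have : j₁ (graphProductOf _ _ a g) = graphProductOf (adjOf L) G a.1 g :=
        gpToFull_of L G (fun v => v ≠ v₁) a g
      rw [this]
      exact (gpLift_of (adj := adjOf L) (G := G)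
        (M := Monoid.PushoutI (amalgFam ι₁ ι₂)) fwdf hcomm a.1 g).trans
        (fwdf_eq1 a.1 a.2 g)
  refine ⟨MonoidHom.toMulEquiv fwd back hbf hfb, ?_, ?_⟩
  · intro v h g
    exact (gpLift_of (adj := adjOf L) (G := G)
      (M := Monoid.PushoutI (amalgFam ι₁ ι₂)) fwdf hcomm v g).trans (fwdf_eq1 v h g)
  · intro v h g
    exact (gpLift_of (adj := adjOf L) (G := G)
      (M := Monoid.PushoutI (amalgFam ι₁ ι₂)) fwdf hcomm v g).trans (fwdf_alt v h g)
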